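/- Among all valid formats (m_1,…,m_r) for n = 2^s + k players (0 ≤ k < 2^s), with p > 1/2, the product ∏_{j=1}^r ((2m_j/r_j)p + 1 − 2m_j/r_j) is maximized by the balanced format, with maximal value ((2k/n)p + 1 − 2k/n)·p^s. -/

import Mathlib

/-- `ValidFormat n r m` : `m 0, …, m (r-1)` are the numbers of matches per round of a
knockout tournament format for `n` players. -/
def ValidFormat (n r : ℕ) (m : ℕ → ℕ) : Prop :=
  (∀ j < r, 0 < m j ∧ 2 * m j ≤ n - ∑ l ∈ Finset.range j, m l) ∧
  ∑ j ∈ Finset.range r, m j = n - 1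

/-- The product `∏_j (2 m_j / r_j · p + 1 − 2 m_j / r_j)` associated with a format. -/
noncomputable def formatProd (n r : ℕ) (m : ℕ → ℕ) (p : ℝ) : ℝ :=
  ∏ j ∈ Finset.range r,
    ((2 * m j / ((n : ℝ) - ∑ l ∈ Finset.range j, (m l : ℝ))) * p
      + 1 - 2 * m j / ((n : ℝ) - ∑ l ∈ Finset.range j, (m l : ℝ)))

noncomputable def Qval (p : ℝ) (r : ℕ) : ℝ :=
  ((2 ^ Nat.log 2 r : ℝ) + (2*p - 1) * ((r : ℝ) - 2 ^ Nat.log 2 r)) / r * p ^ Nat.log 2 r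

lemma Qval_one (p : ℝ) : Qval p 1 = 1 := by simp [Qval]

lemma Qval_nonneg {p : ℝ} (hp : p ∈ Set.Ioo (1/2 : ℝ) 1) (r : ℕ) : 0 ≤ Qval p r := by
  obtain ⟨hp1, hp2⟩ := hp
  rcases Nat.eq_zero_or_pos r with h | h
  · simp [h, Qval]
  · have h1 : (2:ℕ) ^ Nat.log 2 r ≤ r := Nat.pow_log_le_self 2 h.ne'
    have h1' : ((2:ℝ)) ^ Nat.log 2 r ≤ (r:ℝ) := by exact_mod_cast h1
    have hrp : (0:ℝ) < r := by exact_mod_cast h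
    have hpp : (0:ℝ) < p := by linarith
    apply mul_nonneg
    · apply div_nonneg _ hrp.le
      nlinarith [pow_pos (by norm_num : (0:ℝ) < 2) (Nat.log 2 r)]
    · positivity

lemma key_step {p : ℝ} (hp : p ∈ Set.Ioo (1/2 : ℝ) 1) (n m0 : ℕ) (hm : 1 ≤ m0)
    (h2m : 2 * m0 ≤ n) :
    ((2 * m0 / (n:ℝ)) * p + 1 - 2 * m0 / (n:ℝ)) * Qval p (n - m0) ≤ Qval p n := by
  obtain ⟨hp1, hp2⟩ := hp
  have hn2 : 2 ≤ n := by omega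
  set t := n - m0 with ht
  set σ := Nat.log 2 n with hσ
  set s := Nat.log 2 t with hsdef
  have ht1 : 1 ≤ t := by omega
  have hσ1 : 2 ^ σ ≤ n := Nat.pow_log_le_self 2 (by omega)
  have hσ2 : n < 2 ^ (σ + 1) := Nat.lt_pow_succ_log_self (by norm_num) n
  have hs1 : 2 ^ s ≤ t := Nat.pow_log_le_self 2 (by omega)
  have hs2 : t < 2 ^ (s + 1) := Nat.lt_pow_succ_log_self (by norm_num) t
  have hσpos : 1 ≤ σ := by
    by_contra h
    have : σ = 0 := by omega
    rw [this] at hσ2; omega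
  have hN : (0:ℝ) < n := by exact_mod_cast (by omega : 0 < n)
  have hT : (0:ℝ) < t := by exact_mod_cast (by omega : 0 < t)
  have hden : (0:ℝ) < (t:ℝ) * n := by positivity
  have hcast : ((t:ℝ)) = (n:ℝ) - m0 := by
    rw [ht]; push_cast [Nat.cast_sub (by omega : m0 ≤ n)]; ring
  have hα0 : 0 < 2*p - 1 := by linarith
  have hα1 : 2*p - 1 < 1 := by linarith
  have hM1 : (1:ℝ) ≤ m0 := by exact_mod_cast hm
  have hfac : (2 * m0 / (n:ℝ)) * p + 1 - 2 * m0 / (n:ℝ)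
      = ((t:ℝ) + (m0:ℝ) * (2*p-1)) / n := by
    rw [hcast]; field_simp; ring
  rw [hfac]
  by_cases hc : 2 ^ σ ≤ t
  · -- same log: s = σ
    have hseq : s = σ := by
      rw [hsdef]
      exact Nat.log_eq_of_pow_le_of_lt_pow hc (by omega)
    unfold Qval
    rw [← hsdef, ← hσ, hseq]
    have ha : ((2:ℝ)) ^ σ ≤ (t:ℝ) := by exact_mod_cast hc
    set a : ℝ := (2:ℝ) ^ σ with hadef
    have hapos : 0 < a := by positivity
    have hppos : (0:ℝ) < p ^ σ := by positivity
    have core : (((t:ℝ) + m0 * (2*p-1)) * ((a + (2*p-1) * ((t:ℝ) - a)) * p ^ σ))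
        ≤ ((a + (2*p-1) * ((n:ℝ) - a)) * p ^ σ * (t:ℝ)) := by
      have hMn : (n:ℝ) = (t:ℝ) + m0 := by rw [hcast]; ring
      have core0 : ((t:ℝ) + m0 * (2*p-1)) * (a + (2*p-1) * ((t:ℝ) - a))
          ≤ (a + (2*p-1) * ((n:ℝ) - a)) * t := by
        rw [hMn]
        nlinarith [mul_nonneg (mul_nonneg (mul_nonneg hα0.le (by linarith : (0:ℝ) ≤ 1 - (2*p-1)))
          (by linarith : (0:ℝ) ≤ (t:ℝ) - a)) (by linarith : (0:ℝ) ≤ (m0:ℝ))]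
      calc ((t:ℝ) + m0 * (2*p-1)) * ((a + (2*p-1) * ((t:ℝ) - a)) * p ^ σ)
          = (((t:ℝ) + m0 * (2*p-1)) * (a + (2*p-1) * ((t:ℝ) - a))) * p ^ σ := by ring
        _ ≤ ((a + (2*p-1) * ((n:ℝ) - a)) * t) * p ^ σ :=
            mul_le_mul_of_nonneg_right core0 hppos.le
        _ = (a + (2*p-1) * ((n:ℝ) - a)) * p ^ σ * (t:ℝ) := by ring
    calc ((t:ℝ) + ↑m0 * (2*p-1)) / ↑n * ((a + (2*p-1) * ((t:ℝ) - a)) / ↑t * p ^ σ)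
        = (((t:ℝ) + m0 * (2*p-1)) * ((a + (2*p-1) * ((t:ℝ) - a)) * p ^ σ)) / ((t:ℝ) * n) := by
          ring
      _ ≤ ((a + (2*p-1) * ((n:ℝ) - a)) * p ^ σ * (t:ℝ)) / ((t:ℝ) * n) :=
          (div_le_div_iff_of_pos_right hden).mpr core
      _ = (a + (2*p-1) * ((n:ℝ) - a)) / ↑n * p ^ σ := by
          field_simp
  · -- s = σ - 1
    have hseq : σ = s + 1 := by
      have h1 : s = σ - 1 := by
        rw [hsdef]
        refine Nat.log_eq_of_pow_le_of_lt_pow ?_ ?_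
        · have h2 : 2 * 2 ^ (σ-1) = 2 ^ σ := by
            rw [← pow_succ']; congr 1; omega
          omega
        · have h3 : σ - 1 + 1 = σ := by omega
          rw [h3]; omega
      omega
    unfold Qval
    rw [← hsdef, ← hσ, hseq]
    have hb : ((2:ℝ)) ^ s ≤ (t:ℝ) := by exact_mod_cast hs1
    have hb2 : (t:ℝ) < 2 ^ (s+1) := by exact_mod_cast hs2
    have hna : ((2:ℝ)) ^ (s+1) ≤ (n:ℝ) := by
      have := hσ1; rw [hseq] at this; exact_mod_cast this
    set b : ℝ := (2:ℝ) ^ s with hbdef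
    have hbpos : 0 < b := by positivity
    have hppos : (0:ℝ) < p ^ s := by positivity
    have h2b : ((2:ℝ)) ^ (s+1) = 2 * b := by rw [hbdef]; ring
    rw [h2b]
    have hMn : (n:ℝ) = (t:ℝ) + m0 := by rw [hcast]; ring
    have h2t : (n:ℝ) ≤ 2 * t := by
      have h' : (2:ℝ) * m0 ≤ n := by exact_mod_cast h2m
      linarith [hMn]
    have hb2' : (t:ℝ) < 2 * b := by rw [← h2b]; exact hb2
    have core : (((t:ℝ) + m0 * (2*p-1)) * ((b + (2*p-1) * ((t:ℝ) - b)) * p ^ s))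
        ≤ ((2*b + (2*p-1) * ((n:ℝ) - 2*b)) * p ^ (s+1) * (t:ℝ)) := by
      have core0 : ((t:ℝ) + m0 * (2*p-1)) * (b + (2*p-1) * ((t:ℝ) - b))
          ≤ (2*b + (2*p-1) * ((n:ℝ) - 2*b)) * p * t := by
        rw [hMn]
        nlinarith [mul_nonneg (mul_nonneg (mul_nonneg hα0.le (by linarith : (0:ℝ) ≤ 1 - (2*p-1)))
          (by linarith : (0:ℝ) ≤ (t:ℝ) - m0)) (by linarith : (0:ℝ) ≤ 2*b - (t:ℝ))]
      calc ((t:ℝ) + m0 * (2*p-1)) * ((b + (2*p-1) * ((t:ℝ) - b)) * p ^ s)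
          = (((t:ℝ) + m0 * (2*p-1)) * (b + (2*p-1) * ((t:ℝ) - b))) * p ^ s := by ring
        _ ≤ ((2*b + (2*p-1) * ((n:ℝ) - 2*b)) * p * t) * p ^ s :=
            mul_le_mul_of_nonneg_right core0 hppos.le
        _ = (2*b + (2*p-1) * ((n:ℝ) - 2*b)) * p ^ (s+1) * (t:ℝ) := by ring
    calc ((t:ℝ) + ↑m0 * (2*p-1)) / ↑n * ((b + (2*p-1) * ((t:ℝ) - b)) / ↑t * p ^ s)
        = (((t:ℝ) + m0 * (2*p-1)) * ((b + (2*p-1) * ((t:ℝ) - b)) * p ^ s)) / ((t:ℝ) * n) := by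
          ring
      _ ≤ ((2*b + (2*p-1) * ((n:ℝ) - 2*b)) * p ^ (s+1) * (t:ℝ)) / ((t:ℝ) * n) :=
          (div_le_div_iff_of_pos_right hden).mpr core
      _ = (2*b + (2*p-1) * ((n:ℝ) - 2*b)) / ↑n * p ^ (s+1) := by
          field_simp

lemma le_Qval {p : ℝ} (hp : p ∈ Set.Ioo (1/2 : ℝ) 1) :
    ∀ (r n : ℕ) (m : ℕ → ℕ), 1 ≤ n → ValidFormat n r m → formatProd n r m p ≤ Qval p n := by
  intro r
  induction r with
  | zero =>
    intro n m hn hv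
    obtain ⟨_, hsum⟩ := hv
    simp only [Finset.sum_range_zero] at hsum
    have : n = 1 := by omega
    subst this
    simp [formatProd, Qval_one]
  | succ r ih =>
    intro n m hn hv
    obtain ⟨hcond, hsum⟩ := hv
    obtain ⟨hm0pos, hm0le⟩ := hcond 0 (by omega)
    simp only [Finset.sum_range_zero, Nat.sub_zero] at hm0le
    have hn2 : 2 ≤ n := by omega
    set n' := n - m 0 with hn'
    have hm0n : m 0 ≤ n := by omega
    have hn'1 : 1 ≤ n' := by omega
    -- shifted format
    set m' : ℕ → ℕ := fun j => m (j + 1) with hm'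
    have hv' : ValidFormat n' r m' := by
      constructor
      · intro j hj
        obtain ⟨h1, h2⟩ := hcond (j+1) (by omega)
        refine ⟨h1, ?_⟩
        have hsumsucc : ∑ l ∈ Finset.range (j+1), m l
            = ∑ l ∈ Finset.range j, m' l + m 0 := Finset.sum_range_succ' m j
        have : n - ∑ l ∈ Finset.range (j+1), m l = n' - ∑ l ∈ Finset.range j, m' l := by
          rw [hsumsucc]; omega
        rw [← this]; exact h2
      · have hsumsucc : ∑ l ∈ Finset.range (r+1), m l
            = ∑ l ∈ Finset.range r, m' l + m 0 := Finset.sum_range_succ' m r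
        rw [hsumsucc] at hsum
        omega
    have hIH := ih n' m' hn'1 hv'
    -- split off first factor
    have hprod : formatProd n (r+1) m p
        = ((2 * m 0 / (n:ℝ)) * p + 1 - 2 * m 0 / (n:ℝ)) * formatProd n' r m' p := by
      unfold formatProd
      rw [Finset.prod_range_succ']
      simp only [Finset.sum_range_zero, Nat.cast_zero, sub_zero]
      rw [mul_comm]
      congr 1
      apply Finset.prod_congr rfl
      intro j _
      have hcast : ((n':ℕ):ℝ) = (n:ℝ) - (m 0 : ℝ) := by
        rw [hn']; push_cast [Nat.cast_sub hm0n]; ring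
      have hden : (n:ℝ) - ∑ l ∈ Finset.range (j+1), (m l : ℝ)
          = (n':ℝ) - ∑ l ∈ Finset.range j, (m' l : ℝ) := by
        rw [Finset.sum_range_succ' (fun l => (m l : ℝ)) j, hcast]
        ring
      rw [hden]
    rw [hprod]
    have hfacpos : 0 ≤ (2 * m 0 / (n:ℝ)) * p + 1 - 2 * m 0 / (n:ℝ) := by
      obtain ⟨hp1, hp2⟩ := hp
      have hNpos : (0:ℝ) < n := by exact_mod_cast (by omega : 0 < n)
      have h1 : 2 * (m 0 : ℝ) / n ≤ 1 := by
        rw [div_le_one hNpos]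
        exact_mod_cast hm0le
      have h0 : 0 ≤ 2 * (m 0 : ℝ) / n := by positivity
      nlinarith
    calc ((2 * m 0 / (n:ℝ)) * p + 1 - 2 * m 0 / (n:ℝ)) * formatProd n' r m' p
        ≤ ((2 * m 0 / (n:ℝ)) * p + 1 - 2 * m 0 / (n:ℝ)) * Qval p n' :=
          mul_le_mul_of_nonneg_left hIH hfacpos
      _ ≤ Qval p n := key_step hp n (m 0) hm0pos hm0le

lemma sum_halving (s : ℕ) : ∀ j ≤ s, ∑ l ∈ Finset.range j, 2^(s-1-l) = 2^s - 2^(s-j) := by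
  intro j
  induction j with
  | zero => simp
  | succ j ih =>
    intro hj
    rw [Finset.sum_range_succ, ih (by omega)]
    have h1 : 2^(s-j) = 2 * 2^(s-1-j) := by
      rw [← pow_succ']; congr 1; omega
    have h2 : 2^(s-(j+1)) = 2^(s-1-j) := by congr 1; omega
    have h3 : 2^(s-j) ≤ 2^s := Nat.pow_le_pow_right (by norm_num) (by omega)
    omega

lemma valid_halving (s : ℕ) : ValidFormat (2^s) s (fun j => 2^(s-1-j)) := by
  constructor
  · intro j hj
    simp only
    refine ⟨by positivity, ?_⟩
    rw [sum_halving s j (by omega)]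
    have h3 : 2^(s-j) ≤ 2^s := Nat.pow_le_pow_right (by norm_num) (by omega)
    have h1 : 2 * 2^(s-1-j) = 2^(s-j) := by
      rw [← pow_succ']; congr 1; omega
    omega
  · simp only
    rw [sum_halving s s le_rfl]
    simp

lemma prod_halving (s : ℕ) (p : ℝ) : formatProd (2^s) s (fun j => 2^(s-1-j)) p = p^s := by
  have heq : formatProd (2^s) s (fun j => 2^(s-1-j)) p = ∏ _j ∈ Finset.range s, p := by
    unfold formatProd
    refine Finset.prod_congr rfl ?_
    intro j hj
    rw [Finset.mem_range] at hj
    simp only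
    have h3 : 2^(s-j) ≤ 2^s := Nat.pow_le_pow_right (by norm_num) (by omega)
    have e1 : ∑ l ∈ Finset.range j, ((2^(s-1-l) : ℕ) : ℝ) = ((2^s - 2^(s-j) : ℕ) : ℝ) := by
      rw [← Nat.cast_sum]
      congr 1
      exact sum_halving s j hj.le
    rw [e1]
    have e2 : ((2^s : ℕ):ℝ) - ((2^s - 2^(s-j) : ℕ):ℝ) = ((2^(s-j):ℕ):ℝ) := by
      push_cast [Nat.cast_sub h3]
      ring
    rw [e2]
    have e3 : 2 * ((2^(s-1-j):ℕ):ℝ) = ((2^(s-j):ℕ):ℝ) := by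
      have h1 : 2 * 2^(s-1-j) = 2^(s-j) := by
        rw [← pow_succ']; congr 1; omega
      exact_mod_cast congrArg (Nat.cast (R := ℝ)) h1
    have hpos : (0:ℝ) < ((2^(s-j) : ℕ) : ℝ) := by positivity
    rw [e3, div_self hpos.ne']
    ring
  rw [heq, Finset.prod_const, Finset.card_range]

section Unbalanced

variable (s k : ℕ)

/-- Balanced format when `k ≥ 1`: first round has `k` matches, then halving. -/
def balFormat : ℕ → ℕ := fun j => if j = 0 then k else 2^(s-j)

lemma balFormat_sum (j : ℕ) (hj1 : 1 ≤ j) (hjs : j ≤ s+1) :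
    ∑ l ∈ Finset.range j, balFormat s k l = k + (2^s - 2^(s+1-j)) := by
  obtain ⟨i, rfl⟩ : ∃ i, j = i + 1 := ⟨j - 1, by omega⟩
  rw [Finset.sum_range_succ']
  have h1 : ∀ l, balFormat s k (l+1) = 2^(s-1-l) := by
    intro l
    simp only [balFormat, Nat.succ_ne_zero, if_false]
    congr 1
    omega
  have h2 : balFormat s k 0 = k := by simp [balFormat]
  rw [h2]
  rw [Finset.sum_congr rfl (fun l _ => h1 l), sum_halving s i (by omega)]
  have h4 : s + 1 - (i+1) = s - i := by omega
  rw [h4]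
  have h3 : 2^(s-i) ≤ 2^s := Nat.pow_le_pow_right (by norm_num) (by omega)
  omega

lemma balFormat_valid (hk : 1 ≤ k) (hks : k < 2^s) :
    ValidFormat (2^s + k) (s+1) (balFormat s k) := by
  constructor
  · intro j hj
    rcases Nat.eq_zero_or_pos j with rfl | hj1
    · have h0 : balFormat s k 0 = k := rfl
      refine ⟨by rw [h0]; omega, ?_⟩
      rw [h0]
      simp only [Finset.sum_range_zero, Nat.sub_zero]
      omega
    · have hmj : balFormat s k j = 2^(s-j) := by
        simp only [balFormat, if_neg (by omega : j ≠ 0)]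
      refine ⟨by rw [hmj]; positivity, ?_⟩
      rw [hmj, balFormat_sum s k j (by omega) (by omega)]
      have h3 : 2^(s+1-j) ≤ 2^s := Nat.pow_le_pow_right (by norm_num) (by omega)
      have h4 : 2 * 2^(s-j) = 2^(s+1-j) := by
        rw [← pow_succ']; congr 1; omega
      omega
  · rw [balFormat_sum s k (s+1) (by omega) le_rfl]
    simp only [Nat.sub_self, pow_zero]
    have h3 : (1:ℕ) ≤ 2^s := Nat.one_le_two_pow
    omega

lemma balFormat_prod (hk : 1 ≤ k) (hks : k < 2^s) (p : ℝ) :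
    formatProd (2^s + k) (s+1) (balFormat s k) p
      = ((2*k/((2^s + k : ℕ):ℝ)) * p + 1 - 2*k/((2^s + k : ℕ):ℝ)) * p ^ s := by
  set n : ℕ := 2^s + k with hn
  unfold formatProd
  rw [Finset.prod_range_succ']
  have hf0 : (2 * (balFormat s k 0 : ℝ) / ((n : ℝ) - ∑ l ∈ Finset.range 0, (balFormat s k l : ℝ))) * p
      + 1 - 2 * (balFormat s k 0 : ℝ) / ((n : ℝ) - ∑ l ∈ Finset.range 0, (balFormat s k l : ℝ))
      = (2*k/((n:ℕ):ℝ)) * p + 1 - 2*k/((n:ℕ):ℝ) := by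
    simp [balFormat]
  rw [hf0]
  have hfac : ∀ j ∈ Finset.range s,
      (2 * ((balFormat s k (j+1) : ℕ) : ℝ)
          / ((n : ℝ) - ∑ l ∈ Finset.range (j+1), (balFormat s k l : ℝ))) * p
        + 1 - 2 * ((balFormat s k (j+1) : ℕ) : ℝ)
          / ((n : ℝ) - ∑ l ∈ Finset.range (j+1), (balFormat s k l : ℝ)) = p := by
    intro j hj
    rw [Finset.mem_range] at hj
    have hsum : ∑ l ∈ Finset.range (j+1), ((balFormat s k l : ℕ) : ℝ)
        = ((k + (2^s - 2^(s-j)) : ℕ) : ℝ) := by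
      rw [← Nat.cast_sum]
      congr 1
      rw [balFormat_sum s k (j+1) (by omega) (by omega)]
      have e : s + 1 - (j+1) = s - j := by omega
      rw [e]
    have h3 : 2^(s-j) ≤ 2^s := Nat.pow_le_pow_right (by norm_num) (by omega)
    have hden : (n : ℝ) - ∑ l ∈ Finset.range (j+1), ((balFormat s k l : ℕ) : ℝ)
        = ((2^(s-j) : ℕ) : ℝ) := by
      rw [hsum, hn]
      push_cast [Nat.cast_sub h3]
      ring
    have hmj : balFormat s k (j+1) = 2^(s-(j+1)) := by
      simp only [balFormat, Nat.succ_ne_zero, if_false]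
    have hnum : 2 * ((balFormat s k (j+1) : ℕ) : ℝ) = ((2^(s-j) : ℕ) : ℝ) := by
      rw [hmj]
      have h1 : 2 * 2^(s-(j+1)) = 2^(s-j) := by
        rw [← pow_succ']; congr 1; omega
      exact_mod_cast congrArg (Nat.cast (R := ℝ)) h1
    have hpos : (0:ℝ) < ((2^(s-j) : ℕ) : ℝ) := by positivity
    rw [hden, hnum, div_self hpos.ne']
    ring
  have hprod : (∏ j ∈ Finset.range s,
      ((2 * ((balFormat s k (j+1) : ℕ) : ℝ)
          / ((n : ℝ) - ∑ l ∈ Finset.range (j+1), (balFormat s k l : ℝ))) * p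
        + 1 - 2 * ((balFormat s k (j+1) : ℕ) : ℝ)
          / ((n : ℝ) - ∑ l ∈ Finset.range (j+1), (balFormat s k l : ℝ)))) = p ^ s := by
    have heq : (∏ j ∈ Finset.range s,
        ((2 * ((balFormat s k (j+1) : ℕ) : ℝ)
            / ((n : ℝ) - ∑ l ∈ Finset.range (j+1), (balFormat s k l : ℝ))) * p
          + 1 - 2 * ((balFormat s k (j+1) : ℕ) : ℝ)
            / ((n : ℝ) - ∑ l ∈ Finset.range (j+1), (balFormat s k l : ℝ))))
        = ∏ _j ∈ Finset.range s, p := Finset.prod_congr rfl hfac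
    rw [heq, Finset.prod_const, Finset.card_range]
  rw [hprod, mul_comm]

end Unbalanced

theorem stmt_11 (s k n : ℕ) (hk : k < 2 ^ s) (hn : n = 2 ^ s + k) (hs : 1 ≤ s)
    (p : ℝ) (hp : p ∈ Set.Ioo (1/2 : ℝ) 1) :
    (∀ r : ℕ, ∀ m : ℕ → ℕ, ValidFormat n r m →
        formatProd n r m p ≤ ((2*k/(n:ℝ)) * p + 1 - 2*k/(n:ℝ)) * p ^ s) ∧
    (∃ r : ℕ, ∃ m : ℕ → ℕ, ValidFormat n r m ∧
        formatProd n r m p = ((2*k/(n:ℝ)) * p + 1 - 2*k/(n:ℝ)) * p ^ s) := by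
  have hn1 : 1 ≤ n := by
    have : (1:ℕ) ≤ 2^s := Nat.one_le_two_pow
    omega
  have hlog : Nat.log 2 n = s := by
    apply Nat.log_eq_of_pow_le_of_lt_pow
    · omega
    · have : 2^(s+1) = 2 * 2^s := by rw [pow_succ']
      omega
  have hNpos : (0:ℝ) < n := by exact_mod_cast (by omega : 0 < n)
  have hcastn : (n:ℝ) = 2^s + k := by rw [hn]; push_cast; ring
  have hQ : Qval p n = ((2*k/(n:ℝ)) * p + 1 - 2*k/(n:ℝ)) * p ^ s := by
    unfold Qval
    rw [hlog, hcastn]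
    have hpos : (0:ℝ) < 2^s + k := by positivity
    field_simp
    ring_nf
    try tauto
  constructor
  · intro r m hv
    calc formatProd n r m p ≤ Qval p n := le_Qval hp r n m hn1 hv
      _ = _ := hQ
  · rcases Nat.eq_zero_or_pos k with rfl | hk1
    · refine ⟨s, fun j => 2^(s-1-j), ?_, ?_⟩
      · rw [hn]; simpa using valid_halving s
      · have h1 : n = 2^s := by omega
        rw [h1, prod_halving s p]
        norm_num
    · refine ⟨s+1, balFormat s k, ?_, ?_⟩
      · rw [hn]; exact balFormat_valid s k hk1 hk
      · have := balFormat_prod s k hk1 hk p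
        rw [hn]
        convert this using 3
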